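/- Fix natural numbers L (number of observed STFT frames), Fq (number of frequency bins), K ≥ 1 (number of sources), C ≥ 1 (number of microphone channels), F and P (future and past filter taps), and let J = Finset.Icc (-(F : ℤ)) (P : ℤ) be the tap index set. Let X₁, …, X_C : Fin L → Fin Fq → ℂ be the observed per-channel mixtures, let Ŝ₁, …, Ŝ_K : ℤ → Fin Fq → ℂ be source estimates, let σ_N > 0 and c₀ > 0. For a family of filters G = (G^k_c)_{k ∈ Fin K, c ∈ Fin C} (each G^k_c : J → Fin Fq → ℂ), define the joint log-likelihood ℓ(G) = Σ_{c=1}^{C} Real.log (c₀ * Real.exp (-(1/(2 σ_N²)) * Σ_{l,f} ‖X_c l f − Σ_{k=1}^{K} (G^k_c *_l Ŝ_k)(l, f)‖²)) (channels are conditionally independent given sources and filters, so the joint log-likelihood is the sum over channels). Assume for every channel c and all k ≠ k′ and all filters G, G′ : J → Fin Fq → ℂ that Σ_{l,f} (G *_l Ŝ_k)(l,f) * conj((G′ *_l Ŝ_{k′})(l,f)) = 0. Then a family (Ĝ^k_c) maximizes ℓ over all filter families if and only if for every pair (k, c), Ĝ^k_c minimizes the FCP objective G ↦ Σ_{l,f}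 ‖X_c l f − (G *_l Ŝ_k)(l, f)‖² over all filters G : J → Fin Fq → ℂ. -/

import Mathlib

open Finset

/-- Frame-domain convolution of a filter `G` (supported on the tap set
`J = Finset.Icc (-(F : ℤ)) (P : ℤ)`) with a source `S`:
`(G *_l S)(l, f) = ∑_{j ∈ J} G j f * S (l - j) f`. -/
noncomputable def frameConv (L Fq F P : ℕ)
    (G : ↥(Finset.Icc (-(F : ℤ)) (P : ℤ)) → Fin Fq → ℂ)
    (S : ℤ → Fin Fq → ℂ) (l : Fin L) (f : Fin Fq) : ℂ :=
  ∑ j : ↥(Finset.Icc (-(F : ℤ)) (P : ℤ)), G j f * S ((l : ℤ) - (j : ℤ)) f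

/-- The FCP objective for channel mixture `X` and source estimate `S`:
`G ↦ ∑_{l,f} ‖X l f − (G *_l S)(l, f)‖²`. -/
noncomputable def fcpObjective (L Fq F P : ℕ) (X : Fin L → Fin Fq → ℂ)
    (S : ℤ → Fin Fq → ℂ)
    (G : ↥(Finset.Icc (-(F : ℤ)) (P : ℤ)) → Fin Fq → ℂ) : ℝ :=
  ∑ l : Fin L, ∑ f : Fin Fq, ‖X l f - frameConv L Fq F P G S l f‖ ^ 2

/-- The joint Gaussian log-likelihood of a filter family `(G^k_c)`:
the sum over channels `c` of
`log (c₀ * exp (-(1/(2 σ_N²)) * ∑_{l,f} ‖X_c l f − ∑_k (G^k_c *_l Ŝ_k)(l,f)‖²))`. -/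
noncomputable def jointLogLik (L Fq K C F P : ℕ)
    (X : Fin C → Fin L → Fin Fq → ℂ)
    (S : Fin K → ℤ → Fin Fq → ℂ) (σN c₀ : ℝ)
    (G : Fin K → Fin C → ↥(Finset.Icc (-(F : ℤ)) (P : ℤ)) → Fin Fq → ℂ) : ℝ :=
  ∑ c : Fin C, Real.log (c₀ * Real.exp (-(1 / (2 * σN ^ 2)) *
    ∑ l : Fin L, ∑ f : Fin Fq,
      ‖X c l f - ∑ k : Fin K, frameConv L Fq F P (G k c) (S k) l f‖ ^ 2))


noncomputable def Bform (L Fq : ℕ) (u v : Fin L → Fin Fq → ℂ) : ℂ :=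
  ∑ l : Fin L, ∑ f : Fin Fq, u l f * (starRingEnd ℂ) (v l f)

lemma Bform_sub_left {L Fq : ℕ} (u v w : Fin L → Fin Fq → ℂ) :
    Bform L Fq (fun l f => u l f - v l f) w = Bform L Fq u w - Bform L Fq v w := by
  simp [Bform, sub_mul, Finset.sum_sub_distrib]

lemma Bform_sub_right {L Fq : ℕ} (u v w : Fin L → Fin Fq → ℂ) :
    Bform L Fq u (fun l f => v l f - w l f) = Bform L Fq u v - Bform L Fq u w := by
  simp [Bform, mul_sub, Finset.sum_sub_distrib]

lemma Bform_sum_left {L Fq K : ℕ} (Y : Fin K → Fin L → Fin Fq → ℂ) (w : Fin L → Fin Fq → ℂ) :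
    Bform L Fq (fun l f => ∑ k, Y k l f) w = ∑ k, Bform L Fq (Y k) w := by
  simp only [Bform, Finset.sum_mul]
  calc (∑ l : Fin L, ∑ f : Fin Fq, ∑ k, Y k l f * (starRingEnd ℂ) (w l f))
      = ∑ l : Fin L, ∑ k, ∑ f : Fin Fq, Y k l f * (starRingEnd ℂ) (w l f) :=
        Finset.sum_congr rfl fun l _ => Finset.sum_comm
    _ = ∑ k, ∑ l : Fin L, ∑ f : Fin Fq, Y k l f * (starRingEnd ℂ) (w l f) :=
        Finset.sum_comm

lemma Bform_sum_right {L Fq K : ℕ} (Y : Fin K → Fin L → Fin Fq → ℂ) (w : Fin L → Fin Fq → ℂ) :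
    Bform L Fq w (fun l f => ∑ k, Y k l f) = ∑ k, Bform L Fq w (Y k) := by
  simp only [Bform, map_sum, Finset.mul_sum]
  calc (∑ l : Fin L, ∑ f : Fin Fq, ∑ k, w l f * (starRingEnd ℂ) (Y k l f))
      = ∑ l : Fin L, ∑ k, ∑ f : Fin Fq, w l f * (starRingEnd ℂ) (Y k l f) :=
        Finset.sum_congr rfl fun l _ => Finset.sum_comm
    _ = ∑ k, ∑ l : Fin L, ∑ f : Fin Fq, w l f * (starRingEnd ℂ) (Y k l f) :=
        Finset.sum_comm

lemma Bform_norm {L Fq : ℕ} (u : Fin L → Fin Fq → ℂ) :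
    ∑ l : Fin L, ∑ f : Fin Fq, ‖u l f‖ ^ 2 = (Bform L Fq u u).re := by
  simp [Bform, Complex.mul_conj, Complex.re_sum, Complex.sq_norm]

lemma Bform_expand {L Fq K : ℕ} (X : Fin L → Fin Fq → ℂ) (Y : Fin K → Fin L → Fin Fq → ℂ)
    (horth : ∀ k k', k ≠ k' → Bform L Fq (Y k) (Y k') = 0) :
    Bform L Fq (fun l f => X l f - ∑ k, Y k l f) (fun l f => X l f - ∑ k, Y k l f)
      = ∑ k, Bform L Fq (fun l f => X l f - Y k l f) (fun l f => X l f - Y k l f)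
        - ((K : ℂ) - 1) * Bform L Fq X X := by
  have hSS : Bform L Fq (fun l f => ∑ k, Y k l f) (fun l f => ∑ k, Y k l f)
      = ∑ k, Bform L Fq (Y k) (Y k) := by
    rw [Bform_sum_left]
    refine Finset.sum_congr rfl fun k _ => ?_
    rw [Bform_sum_right]
    exact Finset.sum_eq_single k (fun k' _ hk' => horth k k' (Ne.symm hk')) (by simp)
  have hL : Bform L Fq (fun l f => X l f - ∑ k, Y k l f) (fun l f => X l f - ∑ k, Y k l f)
      = Bform L Fq X X - ∑ k, Bform L Fq X (Y k) - ∑ k, Bform L Fq (Y k) X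
        + ∑ k, Bform L Fq (Y k) (Y k) := by
    rw [Bform_sub_left, Bform_sub_right, Bform_sub_right, Bform_sum_left, Bform_sum_right,
      ← hSS]
    ring
  have hR : ∀ k, Bform L Fq (fun l f => X l f - Y k l f) (fun l f => X l f - Y k l f)
      = Bform L Fq X X - Bform L Fq X (Y k) - Bform L Fq (Y k) X + Bform L Fq (Y k) (Y k) := by
    intro k
    rw [Bform_sub_left, Bform_sub_right, Bform_sub_right]
    ring
  rw [hL]
  simp only [hR]
  rw [Finset.sum_add_distrib, Finset.sum_sub_distrib, Finset.sum_sub_distrib,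
    Finset.sum_const, Finset.card_univ, Fintype.card_fin, nsmul_eq_mul]
  ring

lemma norm_expand {L Fq K : ℕ} (X : Fin L → Fin Fq → ℂ) (Y : Fin K → Fin L → Fin Fq → ℂ)
    (horth : ∀ k k', k ≠ k' → Bform L Fq (Y k) (Y k') = 0) :
    ∑ l : Fin L, ∑ f : Fin Fq, ‖X l f - ∑ k, Y k l f‖ ^ 2
      = ∑ k, (∑ l : Fin L, ∑ f : Fin Fq, ‖X l f - Y k l f‖ ^ 2)
        - ((K : ℝ) - 1) * ∑ l : Fin L, ∑ f : Fin Fq, ‖X l f‖ ^ 2 := by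
  have h1 := Bform_norm (L := L) (Fq := Fq) (fun l f => X l f - ∑ k, Y k l f)
  have h2 : ∀ k, ∑ l : Fin L, ∑ f : Fin Fq, ‖X l f - Y k l f‖ ^ 2
      = (Bform L Fq (fun l f => X l f - Y k l f) (fun l f => X l f - Y k l f)).re :=
    fun k => Bform_norm _
  have h3 := Bform_norm (L := L) (Fq := Fq) X
  simp only [h1, h2, h3, Bform_expand X Y horth]
  have : ((K : ℂ) - 1) = (((K : ℝ) - 1 : ℝ) : ℂ) := by push_cast; ring
  rw [this, Complex.sub_re, Complex.re_sum, Complex.re_ofReal_mul]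

lemma separable_min {ι α : Type*} [Fintype ι] [DecidableEq ι] (f : ι → α → ℝ) (x : ι → α) :
    (∀ y : ι → α, ∑ i, f i (x i) ≤ ∑ i, f i (y i)) ↔ ∀ i a, f i (x i) ≤ f i a := by
  constructor
  · intro h i a
    have := h (Function.update x i a)
    rw [← Finset.add_sum_erase _ _ (Finset.mem_univ i),
        ← Finset.add_sum_erase _ (fun j => f j (Function.update x i a j)) (Finset.mem_univ i)]
      at this
    have he : ∑ j ∈ Finset.univ.erase i, f j (Function.update x i a j)
        = ∑ j ∈ Finset.univ.erase i, f j (x j) := by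
      refine Finset.sum_congr rfl fun j hj => ?_
      rw [Function.update_of_ne (Finset.ne_of_mem_erase hj)]
    rw [he, Function.update_self] at this
    linarith
  · intro h y
    exact Finset.sum_le_sum fun i _ => h i (y i)


/-- **Multi-channel FCP is the joint maximum-likelihood relative-RIR estimator.**
Under pairwise orthogonality of the filtered source subspaces (per channel),
a filter family `(Ĝ^k_c)` maximizes the joint log-likelihood if and only if each
`Ĝ^k_c` minimizes the FCP objective for the pair `(k, c)`. -/
theorem fcp_is_maximum_likelihood_multichannel
    (L Fq K C F P : ℕ) (hK : 1 ≤ K) (hC : 1 ≤ C)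
    (X : Fin C → Fin L → Fin Fq → ℂ) (Shat : Fin K → ℤ → Fin Fq → ℂ)
    (σN c₀ : ℝ) (hσ : 0 < σN) (hc : 0 < c₀)
    (horth : ∀ c : Fin C, ∀ k k' : Fin K, k ≠ k' →
      ∀ G G' : ↥(Finset.Icc (-(F : ℤ)) (P : ℤ)) → Fin Fq → ℂ,
        ∑ l : Fin L, ∑ f : Fin Fq,
          frameConv L Fq F P G (Shat k) l f *
            (starRingEnd ℂ) (frameConv L Fq F P G' (Shat k') l f) = 0)
    (Ghat : Fin K → Fin C → ↥(Finset.Icc (-(F : ℤ)) (P : ℤ)) → Fin Fq → ℂ) :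
    (∀ G : Fin K → Fin C → ↥(Finset.Icc (-(F : ℤ)) (P : ℤ)) → Fin Fq → ℂ,
        jointLogLik L Fq K C F P X Shat σN c₀ G
          ≤ jointLogLik L Fq K C F P X Shat σN c₀ Ghat)
      ↔ (∀ k : Fin K, ∀ c : Fin C,
          ∀ G : ↥(Finset.Icc (-(F : ℤ)) (P : ℤ)) → Fin Fq → ℂ,
            fcpObjective L Fq F P (X c) (Shat k) (Ghat k c)
              ≤ fcpObjective L Fq F P (X c) (Shat k) G) := by
  classical
  set a : ℝ := 1 / (2 * σN ^ 2) with ha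
  have hapos : 0 < a := by positivity
  set E : Fin C → ℝ := fun c => ∑ l : Fin L, ∑ f : Fin Fq, ‖X c l f‖ ^ 2 with hE
  set A : ℝ := (C : ℝ) * Real.log c₀ + a * (((K : ℝ) - 1) * ∑ c, E c) with hA
  set T : (Fin K → Fin C → ↥(Finset.Icc (-(F : ℤ)) (P : ℤ)) → Fin Fq → ℂ) → ℝ :=
    fun G => ∑ c : Fin C, ∑ k : Fin K, fcpObjective L Fq F P (X c) (Shat k) (G k c) with hT
  have hjll : ∀ G, jointLogLik L Fq K C F P X Shat σN c₀ G = A - a * T G := by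
    intro G
    have hR : ∀ c : Fin C, ∑ l : Fin L, ∑ f : Fin Fq,
        ‖X c l f - ∑ k, frameConv L Fq F P (G k c) (Shat k) l f‖ ^ 2
        = (∑ k, fcpObjective L Fq F P (X c) (Shat k) (G k c)) - ((K : ℝ) - 1) * E c := by
      intro c
      have := norm_expand (X c) (fun k => frameConv L Fq F P (G k c) (Shat k))
        (fun k k' hkk' => horth c k k' hkk' (G k c) (G k' c))
      simpa [fcpObjective, Bform, hE] using this
    unfold jointLogLik
    have hlog : ∀ c : Fin C,
        Real.log (c₀ * Real.exp (-(1 / (2 * σN ^ 2)) *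
          ∑ l : Fin L, ∑ f : Fin Fq,
            ‖X c l f - ∑ k : Fin K, frameConv L Fq F P (G k c) (Shat k) l f‖ ^ 2))
        = Real.log c₀ + a * (((K : ℝ) - 1) * E c)
          - a * ∑ k, fcpObjective L Fq F P (X c) (Shat k) (G k c) := by
      intro c
      rw [Real.log_mul hc.ne' (Real.exp_pos _).ne', Real.log_exp, hR c, ← ha]
      ring
    rw [Finset.sum_congr rfl fun c _ => hlog c]
    rw [Finset.sum_sub_distrib, Finset.sum_add_distrib, Finset.sum_const,
      Finset.card_univ, Fintype.card_fin, nsmul_eq_mul, hA, hT, ← Finset.mul_sum,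
      ← Finset.mul_sum, ← Finset.mul_sum]
  have hTsum : ∀ G, T G = ∑ p : Fin C × Fin K,
      fcpObjective L Fq F P (X p.1) (Shat p.2) (G p.2 p.1) := by
    intro G
    rw [hT, Fintype.sum_prod_type]
  constructor
  · intro h k c g
    have hsep := (separable_min
      (fun p : Fin C × Fin K => fcpObjective L Fq F P (X p.1) (Shat p.2))
      (fun p => Ghat p.2 p.1)).mp ?_ (c, k) g
    · exact hsep
    · intro y
      have := h (fun k c => y (c, k))
      rw [hjll, hjll] at this
      have hT' : T Ghat ≤ T (fun k c => y (c, k)) := by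
        have := (sub_le_sub_iff_left A).mp this
        exact le_of_mul_le_mul_left this hapos
      rw [hTsum, hTsum] at hT'
      simpa using hT'
  · intro h G
    rw [hjll, hjll]
    have hT' : T Ghat ≤ T G := by
      rw [hT]
      refine Finset.sum_le_sum fun c _ => Finset.sum_le_sum fun k _ => h k c (G k c)
    have := mul_le_mul_of_nonneg_left hT' hapos.le
    linarith
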